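/- Let p_t(x) = (4πt)^{-1/2} exp(-x²/(4t)) be the heat kernel and λ(x) = c_H (1+x²)^{H-1} with H ∈ (1/4, 1/2) and c_H chosen so that ∫_ℝ λ(x) dx = 1. Then for any T > 0, sup over t ∈ (0,T] and x ∈ ℝ of λ(x)^{-1} ∫_ℝ p_t(x-y) λ(y) dy is finite. -/
import Mathlib


open MeasureTheory Real Set

noncomputable def heatK (t x : ℝ) : ℝ :=
  (4 * Real.pi * t) ^ (-(1:ℝ)/2) * Real.exp (-(x ^ 2) / (4 * t))

lemma aux_pointwise (H T t x y : ℝ) (ht : 0 < t) (htT : t ≤ T)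
    (hH1 : 0 < 1 - H) (hH2 : 1 - H ≤ 1) :
    heatK t (x - y) * (1 + y ^ 2) ^ (H - 1) ≤
      (2 : ℝ) ^ (1 - H) * (1 + 8 * T) * (1 + x ^ 2) ^ (H - 1) *
        ((4 * Real.pi * t) ^ (-(1:ℝ)/2) * Real.exp (-(x - y) ^ 2 / (8 * t))) := by
  obtain ⟨z, hz⟩ : ∃ z : ℝ, z = x - y := ⟨_, rfl⟩
  rw [← hz]
  have hT : 0 < T := lt_of_lt_of_le ht htT
  have ha : (0:ℝ) < 1 + x ^ 2 := by positivity
  have hb : (0:ℝ) < 1 + y ^ 2 := by positivity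
  have hd : (0:ℝ) < 1 + z ^ 2 := by positivity
  have hc : (0:ℝ) ≤ (4 * Real.pi * t) ^ (-(1:ℝ)/2) :=
    Real.rpow_nonneg (by positivity) _
  -- Step 1: Peetre
  have peetre : (1 + x ^ 2) ≤ 2 * (1 + z ^ 2) * (1 + y ^ 2) := by
    have hx : x = z + y := by rw [hz]; ring
    rw [hx]
    nlinarith [sq_nonneg (z - y), sq_nonneg (z * y)]
  have step1 : (1 + y ^ 2) ^ (H - 1) ≤
      (1 + x ^ 2) ^ (H - 1) * ((2 : ℝ) ^ (1 - H) * (1 + z ^ 2) ^ (1 - H)) := by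
    have h0 : (0:ℝ) < (1 + x ^ 2) / (2 * (1 + z ^ 2)) := by positivity
    have h1 : (1 + x ^ 2) / (2 * (1 + z ^ 2)) ≤ 1 + y ^ 2 := by
      rw [div_le_iff₀ (by positivity)]
      nlinarith
    have h2 : (1 + y ^ 2) ^ (H - 1) ≤ ((1 + x ^ 2) / (2 * (1 + z ^ 2))) ^ (H - 1) :=
      Real.rpow_le_rpow_of_nonpos h0 h1 (by linarith)
    have h3 : ((1 + x ^ 2) / (2 * (1 + z ^ 2))) ^ (H - 1)
        = (1 + x ^ 2) ^ (H - 1) * ((2 * (1 + z ^ 2)) ^ (1 - H)) := by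
      rw [Real.div_rpow ha.le (by positivity), div_eq_mul_inv,
        ← Real.rpow_neg (by positivity : (0:ℝ) ≤ 2 * (1 + z ^ 2))]
      ring_nf
    have h4 : ((2:ℝ) * (1 + z ^ 2)) ^ (1 - H) = (2:ℝ) ^ (1 - H) * (1 + z ^ 2) ^ (1 - H) :=
      Real.mul_rpow (by norm_num) hd.le
    calc (1 + y ^ 2) ^ (H - 1) ≤ ((1 + x ^ 2) / (2 * (1 + z ^ 2))) ^ (H - 1) := h2
      _ = (1 + x ^ 2) ^ (H - 1) * ((2 : ℝ) ^ (1 - H) * (1 + z ^ 2) ^ (1 - H)) := by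
          rw [h3, h4]
  -- Step 2
  have step2 : (1 + z ^ 2) ^ (1 - H) ≤ (1 + 8 * T) * Real.exp (z ^ 2 / (8 * T)) := by
    have h5 : (1 + z ^ 2) ^ (1 - H) ≤ 1 + z ^ 2 := by
      calc (1 + z ^ 2) ^ (1 - H) ≤ (1 + z ^ 2) ^ (1:ℝ) :=
            Real.rpow_le_rpow_of_exponent_le (by nlinarith) hH2
        _ = 1 + z ^ 2 := Real.rpow_one _
    have h6 : (1:ℝ) ≤ Real.exp (z ^ 2 / (8 * T)) :=
      Real.one_le_exp (by positivity)
    have h7 : z ^ 2 / (8 * T) ≤ Real.exp (z ^ 2 / (8 * T)) :=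
      le_of_lt (lt_of_lt_of_le (by linarith [Real.add_one_le_exp (z ^ 2 / (8 * T))])
        le_rfl)
    have h8 : z ^ 2 ≤ 8 * T * Real.exp (z ^ 2 / (8 * T)) := by
      have := mul_le_mul_of_nonneg_left h7 (by positivity : (0:ℝ) ≤ 8 * T)
      calc z ^ 2 = 8 * T * (z ^ 2 / (8 * T)) := by field_simp
        _ ≤ 8 * T * Real.exp (z ^ 2 / (8 * T)) := this
    nlinarith
  -- Step 3
  have step3 : Real.exp (-z ^ 2 / (4 * t)) * Real.exp (z ^ 2 / (8 * T)) ≤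
      Real.exp (-z ^ 2 / (8 * t)) := by
    rw [← Real.exp_add]
    apply Real.exp_le_exp.2
    have h9 : z ^ 2 / (8 * T) ≤ z ^ 2 / (8 * t) :=
      div_le_div_of_nonneg_left (by positivity) (by positivity) (by linarith)
    have : -z ^ 2 / (4 * t) + z ^ 2 / (8 * t) = -z ^ 2 / (8 * t) := by
      field_simp; ring
    linarith [this]
  -- combine
  have hA : (0:ℝ) ≤ (1 + x ^ 2) ^ (H - 1) := (Real.rpow_pos_of_pos ha _).le
  have h2H : (0:ℝ) ≤ (2:ℝ) ^ (1 - H) := (Real.rpow_pos_of_pos two_pos _).le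
  have hexp : (0:ℝ) ≤ Real.exp (-z ^ 2 / (4 * t)) := (Real.exp_pos _).le
  have key : Real.exp (-z ^ 2 / (4 * t)) * (1 + y ^ 2) ^ (H - 1) ≤
      (2:ℝ) ^ (1 - H) * (1 + 8 * T) * (1 + x ^ 2) ^ (H - 1) *
        Real.exp (-z ^ 2 / (8 * t)) := by
    calc Real.exp (-z ^ 2 / (4 * t)) * (1 + y ^ 2) ^ (H - 1)
        ≤ Real.exp (-z ^ 2 / (4 * t)) *
            ((1 + x ^ 2) ^ (H - 1) * ((2 : ℝ) ^ (1 - H) * (1 + z ^ 2) ^ (1 - H))) :=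
          mul_le_mul_of_nonneg_left step1 hexp
      _ ≤ Real.exp (-z ^ 2 / (4 * t)) *
            ((1 + x ^ 2) ^ (H - 1) * ((2 : ℝ) ^ (1 - H) *
              ((1 + 8 * T) * Real.exp (z ^ 2 / (8 * T))))) := by
          apply mul_le_mul_of_nonneg_left _ hexp
          apply mul_le_mul_of_nonneg_left _ hA
          exact mul_le_mul_of_nonneg_left step2 h2H
      _ = (2:ℝ) ^ (1 - H) * (1 + 8 * T) * (1 + x ^ 2) ^ (H - 1) *
            (Real.exp (-z ^ 2 / (4 * t)) * Real.exp (z ^ 2 / (8 * T))) := by ring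
      _ ≤ (2:ℝ) ^ (1 - H) * (1 + 8 * T) * (1 + x ^ 2) ^ (H - 1) *
            Real.exp (-z ^ 2 / (8 * t)) := by
          apply mul_le_mul_of_nonneg_left step3
          positivity
  have expand : heatK t z * (1 + y ^ 2) ^ (H - 1) =
      (4 * Real.pi * t) ^ (-(1:ℝ)/2) *
        (Real.exp (-z ^ 2 / (4 * t)) * (1 + y ^ 2) ^ (H - 1)) := by
    rw [heatK]; ring_nf
  rw [expand]
  calc (4 * Real.pi * t) ^ (-(1:ℝ)/2) *
        (Real.exp (-z ^ 2 / (4 * t)) * (1 + y ^ 2) ^ (H - 1))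
      ≤ (4 * Real.pi * t) ^ (-(1:ℝ)/2) *
        ((2:ℝ) ^ (1 - H) * (1 + 8 * T) * (1 + x ^ 2) ^ (H - 1) *
          Real.exp (-z ^ 2 / (8 * t))) := mul_le_mul_of_nonneg_left key hc
    _ = (2 : ℝ) ^ (1 - H) * (1 + 8 * T) * (1 + x ^ 2) ^ (H - 1) *
        ((4 * Real.pi * t) ^ (-(1:ℝ)/2) * Real.exp (-z ^ 2 / (8 * t))) := by ring

lemma aux_integral (t x : ℝ) (ht : 0 < t) :
    ∫ y : ℝ, (4 * Real.pi * t) ^ (-(1:ℝ)/2) * Real.exp (-(x - y) ^ 2 / (8 * t))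
      = Real.sqrt 2 := by
  have h8 : (0:ℝ) < (8 * t)⁻¹ := by positivity
  rw [integral_const_mul]
  have hrw : (fun y : ℝ => Real.exp (-(x - y) ^ 2 / (8 * t)))
      = fun y : ℝ => (fun z : ℝ => Real.exp (-(8 * t)⁻¹ * z ^ 2)) (x - y) := by
    funext y
    congr 1
    field_simp
  rw [hrw, integral_sub_left_eq_self (fun z : ℝ => Real.exp (-(8 * t)⁻¹ * z ^ 2)) _ x,
    integral_gaussian ((8 * t)⁻¹)]
  have hπt : (0:ℝ) < 4 * Real.pi * t := by positivity
  have h1 : (4 * Real.pi * t) ^ (-(1:ℝ)/2) = (Real.sqrt (4 * Real.pi * t))⁻¹ := by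
    rw [show (-(1:ℝ)/2) = -(1/2 : ℝ) by norm_num, Real.rpow_neg hπt.le,
      ← Real.sqrt_eq_rpow]
  have h2 : Real.pi / (8 * t)⁻¹ = 2 * (4 * Real.pi * t) := by
    field_simp; ring
  rw [h1, h2, Real.sqrt_mul (by norm_num : (0:ℝ) ≤ 2)]
  have hne : Real.sqrt (4 * Real.pi * t) ≠ 0 := (Real.sqrt_pos.2 hπt).ne'
  field_simp

theorem stmt_0 (H cH : ℝ) (hH : 1/4 < H ∧ H < 1/2)
    (hnorm : ∫ x : ℝ, cH * (1 + x ^ 2) ^ (H - 1) = 1)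
    (T : ℝ) (hT : 0 < T) :
    ∃ C : ℝ, ∀ t ∈ Set.Ioc (0:ℝ) T, ∀ x : ℝ,
      (cH * (1 + x ^ 2) ^ (H - 1))⁻¹ *
        ∫ y : ℝ, heatK t (x - y) * (cH * (1 + y ^ 2) ^ (H - 1)) ≤ C := by
  obtain ⟨hH1, hH2⟩ := hH
  -- cH > 0
  have hcH : 0 < cH := by
    by_contra h
    push_neg at h
    have : ∫ x : ℝ, cH * (1 + x ^ 2) ^ (H - 1) ≤ 0 := by
      apply integral_nonpos
      intro x
      have : (0:ℝ) < (1 + x ^ 2) ^ (H - 1) := Real.rpow_pos_of_pos (by positivity) _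
      exact mul_nonpos_of_nonpos_of_nonneg h this.le
    linarith [hnorm ▸ this]
  refine ⟨(2:ℝ) ^ (1 - H) * (1 + 8 * T) * Real.sqrt 2, ?_⟩
  rintro t ⟨ht, htT⟩ x
  set A := (1 + x ^ 2) ^ (H - 1) with hA
  have hApos : 0 < A := Real.rpow_pos_of_pos (by positivity) _
  have hKpos : (0:ℝ) < (2:ℝ) ^ (1 - H) * (1 + 8 * T) :=
    mul_pos (Real.rpow_pos_of_pos two_pos _) (by linarith)
  -- integrability of the majorant
  have hint : Integrable (fun y : ℝ =>
      cH * ((2:ℝ) ^ (1 - H) * (1 + 8 * T) * A) *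
        ((4 * Real.pi * t) ^ (-(1:ℝ)/2) * Real.exp (-(x - y) ^ 2 / (8 * t)))) := by
    apply Integrable.const_mul
    apply Integrable.const_mul
    have : (fun y : ℝ => Real.exp (-(x - y) ^ 2 / (8 * t)))
        = fun y : ℝ => (fun z : ℝ => Real.exp (-(8 * t)⁻¹ * z ^ 2)) (x - y) := by
      funext y; congr 1; field_simp
    rw [this]
    exact (integrable_exp_neg_mul_sq (by positivity : (0:ℝ) < (8 * t)⁻¹)).comp_sub_left x
  -- integral bound
  have hIb : (∫ y : ℝ, heatK t (x - y) * (cH * (1 + y ^ 2) ^ (H - 1))) ≤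
      ∫ y : ℝ, cH * ((2:ℝ) ^ (1 - H) * (1 + 8 * T) * A) *
        ((4 * Real.pi * t) ^ (-(1:ℝ)/2) * Real.exp (-(x - y) ^ 2 / (8 * t))) := by
    apply integral_mono_of_nonneg
    · filter_upwards with y
      have h1 : (0:ℝ) ≤ heatK t (x - y) := by
        rw [heatK]
        positivity
      have h2 : (0:ℝ) ≤ cH * (1 + y ^ 2) ^ (H - 1) :=
        mul_nonneg hcH.le (Real.rpow_pos_of_pos (by positivity) _).le
      exact mul_nonneg h1 h2
    · exact hint
    · filter_upwards with y
      have := aux_pointwise H T t x y ht htT (by linarith) (by linarith)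
      calc heatK t (x - y) * (cH * (1 + y ^ 2) ^ (H - 1))
          = cH * (heatK t (x - y) * (1 + y ^ 2) ^ (H - 1)) := by ring
        _ ≤ cH * ((2 : ℝ) ^ (1 - H) * (1 + 8 * T) * A *
              ((4 * Real.pi * t) ^ (-(1:ℝ)/2) * Real.exp (-(x - y) ^ 2 / (8 * t)))) :=
            mul_le_mul_of_nonneg_left this hcH.le
        _ = cH * ((2:ℝ) ^ (1 - H) * (1 + 8 * T) * A) *
              ((4 * Real.pi * t) ^ (-(1:ℝ)/2) * Real.exp (-(x - y) ^ 2 / (8 * t))) := by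
            ring
  have hIval : (∫ y : ℝ, cH * ((2:ℝ) ^ (1 - H) * (1 + 8 * T) * A) *
        ((4 * Real.pi * t) ^ (-(1:ℝ)/2) * Real.exp (-(x - y) ^ 2 / (8 * t))))
      = cH * ((2:ℝ) ^ (1 - H) * (1 + 8 * T) * A) * Real.sqrt 2 := by
    rw [integral_const_mul, aux_integral t x ht]
  have hmain : (∫ y : ℝ, heatK t (x - y) * (cH * (1 + y ^ 2) ^ (H - 1))) ≤
      cH * A * ((2:ℝ) ^ (1 - H) * (1 + 8 * T) * Real.sqrt 2) := by
    rw [hIval] at hIb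
    calc (∫ y : ℝ, heatK t (x - y) * (cH * (1 + y ^ 2) ^ (H - 1)))
        ≤ cH * ((2:ℝ) ^ (1 - H) * (1 + 8 * T) * A) * Real.sqrt 2 := hIb
      _ = cH * A * ((2:ℝ) ^ (1 - H) * (1 + 8 * T) * Real.sqrt 2) := by ring
  have hcA : 0 < cH * A := mul_pos hcH hApos
  calc (cH * A)⁻¹ * ∫ y : ℝ, heatK t (x - y) * (cH * (1 + y ^ 2) ^ (H - 1))
      ≤ (cH * A)⁻¹ * (cH * A * ((2:ℝ) ^ (1 - H) * (1 + 8 * T) * Real.sqrt 2)) :=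
        mul_le_mul_of_nonneg_left hmain (inv_nonneg.2 hcA.le)
    _ = (2:ℝ) ^ (1 - H) * (1 + 8 * T) * Real.sqrt 2 := by
        rw [← mul_assoc, inv_mul_cancel₀ hcA.ne', one_mul]
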